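/- Let G be a connected 3-regular graph and let f, g: E(G) → {0,1} have different parity. Then the uncolored CFI graphs Y_f(G) and Y_g(G) are not isomorphic. -/

import Mathlib

set_option linter.unusedSectionVars false
set_option linter.unusedVariables false
open symmDiff


open SimpleGraph

variable {V : Type*} [Fintype V] [DecidableEq V]

/-- Vertices of the CFI graph `X_f(G)`: a middle vertex `(v, T)` for each vertex `v`
of `G` and each even subset `T` of the neighbors of `v` (encoding the even-parity
bit-vector `b_u = [u ∈ T]`), and an edge vertex `(v, u, b)` for each directed edge
`(v,u)` of `G` and `b ∈ {0,1}`. -/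
def CFIVert (G : SimpleGraph V) [DecidableRel G.Adj] : Type _ :=
  {x : (V × Finset V) ⊕ (V × V × Bool) //
    Sum.elim (fun p => p.2 ⊆ G.neighborFinset p.1 ∧ Even p.2.card)
      (fun p => G.Adj p.1 p.2.1) x}

/-- The CFI graph `X_f(G)` (as an uncolored graph this is `Y_f(G)`): middle vertex
`v_T` is adjacent to edge vertex `(v,u)_b` iff `b = [u ∈ T]`, and edge vertices
`(v,u)_b` and `(u,v)_{b ⊕ f((u,v))}` are joined for every edge `(u,v)` of `G`. -/
def CFIGraph (G : SimpleGraph V) [DecidableRel G.Adj] (f : Sym2 V → Bool) :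
    SimpleGraph (CFIVert G) :=
  SimpleGraph.fromRel fun a b =>
    match a.1, b.1 with
    | .inl (v, T), .inr (w, u, c) => v = w ∧ c = decide (u ∈ T)
    | .inr (v, u, c), .inr (v', u', c') => v = u' ∧ u = v' ∧ c' = (c ^^ f s(v, u))
    | _, _ => False

/-- The coloring of `X_f(G)`: each middle vertex of the gadget at `v` is colored by
`v`, and the pair of edge vertices `(v,u)_0, (v,u)_1` is colored by `(v,u)`. -/
def CFIColor (G : SimpleGraph V) [DecidableRel G.Adj] : CFIVert G → V ⊕ (V × V) :=
  fun a => Sum.elim (fun p => Sum.inl p.1) (fun p => Sum.inr (p.1, p.2.1)) a.1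

/-- `f : E(G) → {0,1}` has even parity if the number of edges with `f(e) = 1` is even. -/
def EvenParity (G : SimpleGraph V) [DecidableRel G.Adj] (f : Sym2 V → Bool) : Prop :=
  Even ((G.edgeFinset.filter fun e => f e = true).card)

variable {G : SimpleGraph V} [DecidableRel G.Adj] {f : Sym2 V → Bool}

def cmid (G : SimpleGraph V) [DecidableRel G.Adj] (v : V) (T : Finset V)
    (h : T ⊆ G.neighborFinset v ∧ Even T.card) : CFIVert G := ⟨.inl (v,T), h⟩

def cedg (G : SimpleGraph V) [DecidableRel G.Adj] (v u : V) (c : Bool)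
    (h : G.Adj v u) : CFIVert G := ⟨.inr (v,u,c), h⟩

lemma cmid_inj {v v' : V} {T T'} {h h'} (he : cmid G v T h = cmid G v' T' h') :
    v = v' ∧ T = T' := by
  have := congrArg Subtype.val he
  simp only [cmid, Sum.inl.injEq, Prod.mk.injEq] at this
  exact this

lemma cedg_inj {v v' u u' : V} {c c'} {h h'} (he : cedg G v u c h = cedg G v' u' c' h') :
    v = v' ∧ u = u' ∧ c = c' := by
  have := congrArg Subtype.val he
  simp only [cedg, Sum.inr.injEq, Prod.mk.injEq] at this
  exact this

lemma cmid_ne_cedg {v v' u' : V} {T} {c'} {h h'} : cmid G v T h ≠ cedg G v' u' c' h' :=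
  fun he => Sum.inl_ne_inr (congrArg Subtype.val he)

lemma adj_mid_mid {v w : V} {T S : Finset V} {h1 h2} :
    ¬ (CFIGraph G f).Adj (cmid G v T h1) (cmid G w S h2) := by
  intro h
  simp only [CFIGraph, SimpleGraph.fromRel_adj, cmid] at h
  rcases h with ⟨-, h | h⟩ <;> exact h

lemma adj_mid_edg {v w u : V} {T : Finset V} {c : Bool} {h1 h2} :
    (CFIGraph G f).Adj (cmid G v T h1) (cedg G w u c h2) ↔ v = w ∧ c = decide (u ∈ T) := by
  simp only [CFIGraph, SimpleGraph.fromRel_adj, cmid, cedg]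
  constructor
  · rintro ⟨-, h | h⟩
    · exact h
    · exact h.elim
  · rintro ⟨rfl, rfl⟩
    exact ⟨fun h => Sum.inl_ne_inr (congrArg Subtype.val h), Or.inl ⟨rfl, rfl⟩⟩

lemma adj_edg_mid {v w u : V} {T : Finset V} {c : Bool} {h1 h2} :
    (CFIGraph G f).Adj (cedg G w u c h2) (cmid G v T h1) ↔ v = w ∧ c = decide (u ∈ T) := by
  rw [SimpleGraph.adj_comm]; exact adj_mid_edg

lemma adj_edg_edg {v u v' u' : V} {c c' : Bool} {h1 h2} :
    (CFIGraph G f).Adj (cedg G v u c h1) (cedg G v' u' c' h2) ↔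
      v = u' ∧ u = v' ∧ c' = (c ^^ f s(v, u)) := by
  simp only [CFIGraph, SimpleGraph.fromRel_adj, cedg]
  constructor
  · rintro ⟨hne, ⟨rfl, rfl, rfl⟩ | ⟨rfl, rfl, rfl⟩⟩
    · exact ⟨rfl, rfl, rfl⟩
    · refine ⟨rfl, rfl, ?_⟩
      rw [Sym2.eq_swap]
      cases c' <;> simp
  · rintro ⟨rfl, rfl, rfl⟩
    refine ⟨?_, Or.inl ⟨rfl, rfl, rfl⟩⟩
    intro hcontra
    have : v = u := by
      simpa using congrArg (fun x => (Sum.elim Prod.fst (fun p => p.1) x.1)) hcontra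
    exact G.irrefl (this ▸ h1)

/-- Any `CFIVert` is a `cmid` or a `cedg`. -/
lemma cfi_cases (x : CFIVert G) :
    (∃ v T h, x = cmid G v T h) ∨ (∃ v u c h, x = cedg G v u c h) := by
  obtain ⟨(⟨v,T⟩|⟨v,u,c⟩), hx⟩ := x
  · exact Or.inl ⟨v, T, hx, rfl⟩
  · exact Or.inr ⟨v, u, c, hx, rfl⟩

def LongLink {α : Type*} (H : SimpleGraph α) (x y z : α) : Prop :=
  ∃ a b c, a ≠ x ∧ b ≠ x ∧ c ≠ x ∧ H.Adj y a ∧ H.Adj a b ∧ H.Adj b c ∧ H.Adj c z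

def MidP {α : Type*} (H : SimpleGraph α) (x : α) : Prop :=
  ∀ y z, H.Adj x y → H.Adj x z → y ≠ z → LongLink H x y z

lemma MidP.map {α β : Type*} {H : SimpleGraph α} {H' : SimpleGraph β} (e : H ≃g H') {x : α}
    (hx : MidP H x) : MidP H' (e x) := by
  intro y z hy hz hyz
  have hy' : H.Adj x (e.symm y) := by
    have := e.symm.map_adj_iff.mpr hy; simpa using this
  have hz' : H.Adj x (e.symm z) := by
    have := e.symm.map_adj_iff.mpr hz; simpa using this
  obtain ⟨a, b, c, ha, hb, hc, h1, h2, h3, h4⟩ :=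
    hx (e.symm y) (e.symm z) hy' hz' (fun h => hyz (by simpa using congrArg e h))
  refine ⟨e a, e b, e c, fun h => ha (e.injective (by simpa using h)),
    fun h => hb (e.injective (by simpa using h)), fun h => hc (e.injective (by simpa using h)),
    ?_, e.map_adj_iff.mpr h2, e.map_adj_iff.mpr h3, ?_⟩
  · have := e.map_adj_iff.mpr h1; simpa using this
  · have := e.map_adj_iff.mpr h4; simpa using this

lemma third_nbr (hreg : ∀ v, G.degree v = 3) {v a b : V} (ha : G.Adj v a) (hb : G.Adj v b)
    (hab : a ≠ b) : ∃ c, G.Adj v c ∧ c ≠ a ∧ c ≠ b := by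
  have hcard : (G.neighborFinset v).card = 3 := hreg v
  have h1 : 0 < (((G.neighborFinset v).erase a).erase b).card := by
    rw [Finset.card_erase_of_mem, Finset.card_erase_of_mem]
    · omega
    · rwa [SimpleGraph.mem_neighborFinset]
    · rw [Finset.mem_erase]
      exact ⟨hab.symm, by rwa [SimpleGraph.mem_neighborFinset]⟩
  obtain ⟨c, hc⟩ := Finset.card_pos.mp h1
  rw [Finset.mem_erase, Finset.mem_erase, SimpleGraph.mem_neighborFinset] at hc
  exact ⟨c, hc.2.2, hc.2.1, hc.1⟩

lemma second_nbr (hreg : ∀ v, G.degree v = 3) {v u : V} (hu : G.Adj v u) :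
    ∃ w, G.Adj v w ∧ w ≠ u := by
  have hcard : (G.neighborFinset v).card = 3 := hreg v
  have h1 : 0 < ((G.neighborFinset v).erase u).card := by
    rw [Finset.card_erase_of_mem (by rwa [SimpleGraph.mem_neighborFinset])]; omega
  obtain ⟨w, hw⟩ := Finset.card_pos.mp h1
  rw [Finset.mem_erase, SimpleGraph.mem_neighborFinset] at hw
  exact ⟨w, hw.2, hw.1⟩

/-- Existence of a middle neighbor with prescribed bit at `u`. -/
lemma exists_mid_nbr (hreg : ∀ v, G.degree v = 3) {v u : V} (h : G.Adj v u) (c : Bool) :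
    ∃ T hT, (CFIGraph G f).Adj (cedg G v u c h) (cmid G v T hT) := by
  cases c with
  | false =>
      refine ⟨∅, ⟨Finset.empty_subset _, by simp⟩, ?_⟩
      rw [adj_edg_mid]
      simp
  | true =>
      obtain ⟨w, hw, hwu⟩ := second_nbr hreg h
      refine ⟨{u, w}, ⟨?_, ?_⟩, ?_⟩
      · intro x hx
        rw [Finset.mem_insert, Finset.mem_singleton] at hx
        rcases hx with rfl | rfl <;> rwa [SimpleGraph.mem_neighborFinset]
      · rw [Finset.card_insert_of_notMem (by simpa using (Ne.symm hwu)), Finset.card_singleton]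
        exact ⟨1, rfl⟩
      · rw [adj_edg_mid]
        simp

lemma even_card_symmDiff {T S : Finset V} (hT : Even T.card) (hS : Even S.card) :
    Even (T ∆ S).card := by
  have h1 : (T ∆ S) ∪ (T ∩ S) = T ∪ S := by
    rw [← Finset.sup_eq_union, ← Finset.inf_eq_inter]; exact symmDiff_sup_inf T S
  have h2 : Disjoint (T ∆ S) (T ∩ S) := disjoint_symmDiff_inf T S
  have h3 := Finset.card_union_of_disjoint h2
  rw [h1] at h3
  have h4 := Finset.card_union_add_card_inter T S
  obtain ⟨m, hm⟩ := hT; obtain ⟨n, hn⟩ := hS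
  obtain ⟨k, hk⟩ : ∃ k, ((T ∆ S).card = 2*m + 2*n - 2*k ∧ k ≤ m + n) := ⟨(T ∩ S).card, by omega⟩
  exact ⟨m + n - k, by omega⟩

lemma mid_midP (hreg : ∀ v, G.degree v = 3) (v : V) (T : Finset V) (h) :
    MidP (CFIGraph G f) (cmid G v T h) := by
  intro y z hy hz hyz
  obtain ⟨w, S, hS, rfl⟩ | ⟨w, a, ca, hwa, rfl⟩ := cfi_cases y
  · exact absurd hy adj_mid_mid
  obtain ⟨w', S', hS', rfl⟩ | ⟨w', b, cb, hwb, rfl⟩ := cfi_cases z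
  · exact absurd hz adj_mid_mid
  obtain ⟨rfl, rfl⟩ := adj_mid_edg.mp hy
  obtain ⟨rfl, rfl⟩ := adj_mid_edg.mp hz
  have hab : a ≠ b := fun he => hyz (by subst he; rfl)
  obtain ⟨c0, hc0, hc0a, hc0b⟩ := third_nbr hreg hwa hwb hab
  have hbc0 : b ≠ c0 := fun he => hc0b he.symm
  have hpair1 : ({b, c0} : Finset V).card = 2 := by
    rw [Finset.card_insert_of_notMem (by simpa using hbc0), Finset.card_singleton]
  have hpair2 : ({a, c0} : Finset V).card = 2 := by
    rw [Finset.card_insert_of_notMem (by simpa using (fun he => hc0a he.symm : ¬ a = c0)),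
      Finset.card_singleton]
  have hsub : ∀ x y : V, G.Adj v x → G.Adj v y → T ∆ {x, y} ⊆ G.neighborFinset v := by
    intro x y hx hy'
    have step1 : T ∆ {x,y} ⊆ T ∪ {x,y} := by
      intro t ht
      rw [Finset.mem_symmDiff] at ht
      rw [Finset.mem_union]
      tauto
    refine subset_trans step1 ?_
    · intro t ht
      rw [Finset.mem_union] at ht
      rcases ht with ht | ht
      · exact h.1 ht
      · rw [Finset.mem_insert, Finset.mem_singleton] at ht
        rcases ht with rfl | rfl <;> rwa [SimpleGraph.mem_neighborFinset]
  have hS1 : T ∆ {b, c0} ⊆ G.neighborFinset v ∧ Even (T ∆ {b, c0}).card :=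
    ⟨hsub b c0 hwb hc0, even_card_symmDiff h.2 (by rw [hpair1]; exact ⟨1, rfl⟩)⟩
  have hS2 : T ∆ {a, c0} ⊆ G.neighborFinset v ∧ Even (T ∆ {a, c0}).card :=
    ⟨hsub a c0 hwa hc0, even_card_symmDiff h.2 (by rw [hpair2]; exact ⟨1, rfl⟩)⟩
  have hmema : ∀ x : V, x ≠ b → x ≠ c0 → (x ∈ T ∆ {b, c0} ↔ x ∈ T) := by
    intro x h1 h2
    rw [Finset.mem_symmDiff]
    simp [Finset.mem_insert, h1, h2]
  have hmemb : ∀ x : V, x ≠ a → x ≠ c0 → (x ∈ T ∆ {a, c0} ↔ x ∈ T) := by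
    intro x h1 h2
    rw [Finset.mem_symmDiff]
    simp [Finset.mem_insert, h1, h2]
  have hc01 : c0 ∈ T ∆ {b, c0} ↔ ¬ (c0 ∈ T) := by
    rw [Finset.mem_symmDiff]
    simp
  have hc02 : c0 ∈ T ∆ {a, c0} ↔ ¬ (c0 ∈ T) := by
    rw [Finset.mem_symmDiff]
    simp
  refine ⟨cmid G v (T ∆ {b, c0}) hS1, cedg G v c0 (!decide (c0 ∈ T)) hc0,
    cmid G v (T ∆ {a, c0}) hS2, ?_, fun he => cmid_ne_cedg he.symm, ?_, ?_, ?_, ?_, ?_⟩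
  · intro he
    have hT := (cmid_inj he).2
    rw [hT] at hc01
    tauto
  · intro he
    have hT := (cmid_inj he).2
    rw [hT] at hc02
    tauto
  · rw [adj_edg_mid]
    exact ⟨rfl, decide_eq_decide.mpr (hmema a hab (Ne.symm hc0a)).symm⟩
  · rw [adj_mid_edg]
    refine ⟨rfl, ?_⟩
    rw [decide_eq_decide.mpr hc01, decide_not]
  · rw [adj_edg_mid]
    refine ⟨rfl, ?_⟩
    rw [decide_eq_decide.mpr hc02, decide_not]
  · rw [adj_mid_edg]
    exact ⟨rfl, decide_eq_decide.mpr (hmemb b hab.symm hbc0).symm⟩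

lemma edg_not_midP (hreg : ∀ v, G.degree v = 3) (v u : V) (c : Bool) (h : G.Adj v u) :
    ¬ MidP (CFIGraph G f) (cedg G v u c h) := by
  intro hP
  obtain ⟨T, hT, hadjm⟩ := exists_mid_nbr (f := f) hreg h c
  have hbit : c = decide (u ∈ T) := (adj_edg_mid.mp hadjm).2
  have hadjz : (CFIGraph G f).Adj (cedg G v u c h) (cedg G u v (c ^^ f s(v,u)) h.symm) :=
    adj_edg_edg.mpr ⟨rfl, rfl, rfl⟩
  obtain ⟨a, b, c', ha, hb, hc', h1, h2, h3, h4⟩ :=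
    hP (cmid G v T hT) (cedg G u v (c ^^ f s(v,u)) h.symm) hadjm hadjz cmid_ne_cedg
  obtain ⟨w, S, hS, rfl⟩ | ⟨w, q, γ, hwq, rfl⟩ := cfi_cases c'
  · -- c' is a middle at u
    obtain ⟨rfl, -⟩ := adj_mid_edg.mp h4
    obtain ⟨w', S', hS', rfl⟩ | ⟨w', q, γ, hwq, rfl⟩ := cfi_cases b
    · exact absurd h3 adj_mid_mid
    obtain ⟨rfl, -⟩ := adj_edg_mid.mp h3
    obtain ⟨w3, S3, hS3, rfl⟩ | ⟨w3, p, δ, hw3, rfl⟩ := cfi_cases a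
    · exact absurd h1 adj_mid_mid
    obtain ⟨rfl, hδ⟩ := adj_mid_edg.mp h1
    obtain ⟨-, rfl, -⟩ := adj_edg_edg.mp h2
    have hδc : δ = c := by rw [hδ, hbit]
    subst hδc
    exact ha rfl
  · -- c' is an edge vertex; it must be x itself
    obtain ⟨hw, hq, hγ⟩ := adj_edg_edg.mp h4
    subst hw; subst hq
    have : γ = c := by
      cases hfe : f s(w, q) <;> cases c <;> cases γ <;> simp_all
    subst this
    exact hc' rfl

variable {g : Sym2 V → Bool}

def baseOf (x : CFIVert G) : V := Sum.elim Prod.fst (fun p => p.1) x.1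

@[simp] lemma baseOf_cmid {v T h} : baseOf (cmid G v T h) = v := rfl
@[simp] lemma baseOf_cedg {v u c h} : baseOf (cedg G v u c h) = v := rfl

def bitOf (x : CFIVert G) : Bool := Sum.elim (fun _ => false) (fun p => p.2.2) x.1

@[simp] lemma bitOf_cedg {v u c h} : bitOf (cedg G v u c h) = c := rfl

lemma empty_mid_pf (G : SimpleGraph V) [DecidableRel G.Adj] (v : V) :
    (∅ : Finset V) ⊆ G.neighborFinset v ∧ Even (∅ : Finset V).card :=
  ⟨Finset.empty_subset _, by simp⟩

/-- The base-vertex map induced by an isomorphism of CFI graphs. -/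
def sigmaMap (φ : CFIGraph G f ≃g CFIGraph G g) : V → V :=
  fun v => baseOf (φ (cmid G v ∅ (empty_mid_pf G v)))

lemma phi_mid (hreg : ∀ v, G.degree v = 3) (φ : CFIGraph G f ≃g CFIGraph G g)
    (v : V) (T : Finset V) (h) : ∃ w S hS, φ (cmid G v T h) = cmid G w S hS := by
  have hP : MidP (CFIGraph G g) (φ (cmid G v T h)) := (mid_midP hreg v T h).map φ
  obtain hm | ⟨w, u, c, hw, he⟩ := cfi_cases (φ (cmid G v T h))
  · exact hm
  · rw [he] at hP
    exact absurd hP (edg_not_midP hreg w u c hw)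

lemma phi_edge_shape (hreg : ∀ v, G.degree v = 3) (φ : CFIGraph G f ≃g CFIGraph G g)
    (v u : V) (c : Bool) (h : G.Adj v u) :
    ∃ w q c' h', φ (cedg G v u c h) = cedg G w q c' h' := by
  obtain hm | he := cfi_cases (φ (cedg G v u c h))
  · exfalso
    obtain ⟨w, S, hS, heq⟩ := hm
    have hP : MidP (CFIGraph G g) (cmid G w S hS) := mid_midP hreg w S hS
    have hP' := hP.map φ.symm
    rw [← heq] at hP'
    simp only [RelIso.symm_apply_apply] at hP'
    exact edg_not_midP hreg v u c h hP'
  · exact he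

lemma mids_common_nbr (hreg : ∀ v, G.degree v = 3) {v : V} {T T' : Finset V} {h h'}
    (hne : T ≠ T') : ∃ x, (CFIGraph G f).Adj (cmid G v T h) x ∧
      (CFIGraph G f).Adj (cmid G v T' h') x := by
  have hsub : T ∆ T' ⊆ G.neighborFinset v := by
    intro t ht
    rw [Finset.mem_symmDiff] at ht
    rcases ht with ⟨ht, -⟩ | ⟨ht, -⟩
    · exact h.1 ht
    · exact h'.1 ht
  have heven : Even (T ∆ T').card := even_card_symmDiff h.2 h'.2
  obtain ⟨u, hu1, hu2⟩ : ∃ u, u ∈ G.neighborFinset v ∧ u ∉ T ∆ T' := by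
    by_contra hcon
    push_neg at hcon
    have hsub2 : G.neighborFinset v ⊆ T ∆ T' := fun u hu => hcon u hu
    have : T ∆ T' = G.neighborFinset v := Finset.Subset.antisymm hsub hsub2
    rw [this, SimpleGraph.card_neighborFinset_eq_degree, hreg v] at heven
    exact absurd heven (by decide)
  rw [Finset.mem_symmDiff] at hu2
  push_neg at hu2
  have hmem : u ∈ T ↔ u ∈ T' := by tauto
  refine ⟨cedg G v u (decide (u ∈ T)) (by rwa [← SimpleGraph.mem_neighborFinset]), ?_, ?_⟩
  · exact adj_mid_edg.mpr ⟨rfl, rfl⟩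
  · exact adj_mid_edg.mpr ⟨rfl, decide_eq_decide.mpr hmem⟩

lemma phi_mid_base (hreg : ∀ v, G.degree v = 3) (φ : CFIGraph G f ≃g CFIGraph G g)
    (v : V) (T : Finset V) (h) :
    ∃ S hS, φ (cmid G v T h) = cmid G (sigmaMap φ v) S hS := by
  obtain ⟨w, S, hS, heq⟩ := phi_mid hreg φ v T h
  obtain ⟨w', S', hS', heq'⟩ := phi_mid hreg φ v ∅ (empty_mid_pf G v)
  have hw' : sigmaMap φ v = w' := by rw [sigmaMap, heq', baseOf_cmid]
  by_cases hT : T = ∅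
  · subst hT
    rw [hw']
    exact ⟨S', hS', heq'⟩
  · obtain ⟨x, hx1, hx2⟩ := mids_common_nbr (f := f) hreg (h := h)
      (h' := empty_mid_pf G v) hT
    have hadj1 : (CFIGraph G g).Adj (cmid G w S hS) (φ x) := by
      rw [← heq]; exact φ.map_adj_iff.mpr hx1
    have hadj2 : (CFIGraph G g).Adj (cmid G w' S' hS') (φ x) := by
      rw [← heq']; exact φ.map_adj_iff.mpr hx2
    -- common neighbor forces w = w'
    obtain hm | ⟨w2, q, c2, hw2, he2⟩ := cfi_cases (φ x)
    · obtain ⟨w3, S3, hS3, he3⟩ := hm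
      rw [he3] at hadj1
      exact absurd hadj1 adj_mid_mid
    · rw [he2] at hadj1 hadj2
      have e1 := (adj_mid_edg.mp hadj1).1
      have e2 := (adj_mid_edg.mp hadj2).1
      have hww' : w' = w := e2.trans e1.symm
      rw [hw', hww']
      exact ⟨S, hS, heq⟩

lemma phi_edg_base (hreg : ∀ v, G.degree v = 3) (φ : CFIGraph G f ≃g CFIGraph G g)
    {v u : V} {c : Bool} {h : G.Adj v u} :
    ∃ q c' h', φ (cedg G v u c h) = cedg G (sigmaMap φ v) q c' h' := by
  obtain ⟨w, q, c', hw, heq⟩ := phi_edge_shape hreg φ v u c h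
  obtain ⟨T, hT, hadjm⟩ := exists_mid_nbr (f := f) hreg h c
  obtain ⟨S, hS, heqm⟩ := phi_mid_base hreg φ v T hT
  have h1 := φ.map_adj_iff.mpr hadjm
  rw [heq, heqm] at h1
  have hwv : sigmaMap φ v = w := (adj_edg_mid.mp h1).1
  rw [hwv]
  exact ⟨q, c', hw, heq⟩

lemma phi_edg (hreg : ∀ v, G.degree v = 3) (φ : CFIGraph G f ≃g CFIGraph G g)
    {v u : V} (c : Bool) (h : G.Adj v u) :
    ∃ c' h', φ (cedg G v u c h) = cedg G (sigmaMap φ v) (sigmaMap φ u) c' h' := by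
  obtain ⟨q, c', hw, heq⟩ := phi_edg_base hreg φ (c := c) (h := h)
  obtain ⟨q2, c2, hw2, heq2⟩ := phi_edg_base hreg φ (c := c ^^ f s(v,u)) (h := h.symm)
  have hadj : (CFIGraph G f).Adj (cedg G v u c h) (cedg G u v (c ^^ f s(v,u)) h.symm) :=
    adj_edg_edg.mpr ⟨rfl, rfl, rfl⟩
  have h2 := φ.map_adj_iff.mpr hadj
  rw [heq, heq2] at h2
  obtain ⟨e1, e2, -⟩ := adj_edg_edg.mp h2
  subst e2
  exact ⟨c', hw, heq⟩

/-- The twist bits induced by the isomorphism. -/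
def tmap (φ : CFIGraph G f ≃g CFIGraph G g) : V → V → Bool :=
  fun v u => if h : G.Adj v u then bitOf (φ (cedg G v u false h)) else false

lemma phi_edg_eq (hreg : ∀ v, G.degree v = 3) (φ : CFIGraph G f ≃g CFIGraph G g)
    {v u : V} (c : Bool) (h : G.Adj v u) :
    ∃ h', φ (cedg G v u c h) = cedg G (sigmaMap φ v) (sigmaMap φ u) (c ^^ tmap φ v u) h' := by
  obtain ⟨c0, h0', heq0⟩ := phi_edg hreg φ false h
  have ht : tmap φ v u = c0 := by
    rw [tmap, dif_pos h, heq0, bitOf_cedg]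
  cases c with
  | false =>
      refine ⟨h0', ?_⟩
      rw [heq0, ht, Bool.false_xor]
  | true =>
      obtain ⟨c1, h1', heq1⟩ := phi_edg hreg φ true h
      have hne : cedg G v u true h ≠ cedg G v u false h := by
        intro hcon
        simpa using (cedg_inj hcon).2.2
      have hne2 : c1 ≠ c0 := by
        intro hcon
        subst hcon
        exact hne (φ.injective (by rw [heq0, heq1]))
      have hc1 : c1 = (true ^^ tmap φ v u) := by
        rw [ht, Bool.true_xor]
        cases c0 <;> cases c1 <;> simp_all
      refine ⟨h1', ?_⟩
      rw [heq1, hc1]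

lemma rel_edge (hreg : ∀ v, G.degree v = 3) (φ : CFIGraph G f ≃g CFIGraph G g)
    {v u : V} (h : G.Adj v u) :
    ((f s(v,u)) ^^ (tmap φ u v)) =
      ((tmap φ v u) ^^ (g s(sigmaMap φ v, sigmaMap φ u))) := by
  obtain ⟨h1', heq1⟩ := phi_edg_eq hreg φ false h
  obtain ⟨h2', heq2⟩ := phi_edg_eq hreg φ (f s(v,u)) h.symm
  have hadj : (CFIGraph G f).Adj (cedg G v u false h) (cedg G u v (f s(v,u)) h.symm) :=
    adj_edg_edg.mpr ⟨rfl, rfl, (Bool.false_xor _).symm⟩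
  have h2 := φ.map_adj_iff.mpr hadj
  rw [heq1, heq2] at h2
  obtain ⟨-, -, hb⟩ := adj_edg_edg.mp h2
  simpa using hb

lemma sigma_comp (hreg : ∀ v, G.degree v = 3) (φ : CFIGraph G f ≃g CFIGraph G g)
    (v : V) : sigmaMap φ.symm (sigmaMap φ v) = v := by
  obtain ⟨S, hS, heq⟩ := phi_mid_base hreg φ v ∅ (empty_mid_pf G v)
  obtain ⟨S', hS', heq'⟩ := phi_mid_base hreg φ.symm (sigmaMap φ v) S hS
  have h1 : φ.symm (cmid G (sigmaMap φ v) S hS) = cmid G v ∅ (empty_mid_pf G v) := by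
    rw [← heq]
    exact RelIso.symm_apply_apply _ _
  rw [h1] at heq'
  exact ((cmid_inj heq').1).symm

lemma sigma_bij (hreg : ∀ v, G.degree v = 3) (φ : CFIGraph G f ≃g CFIGraph G g) :
    Function.Bijective (sigmaMap φ) := by
  have hli : Function.LeftInverse (sigmaMap φ.symm) (sigmaMap φ) := sigma_comp hreg φ
  have hri : Function.RightInverse (sigmaMap φ.symm) (sigmaMap φ) := by
    intro v
    have h := sigma_comp hreg φ.symm v
    rwa [show φ.symm.symm = φ from rfl] at h
  exact ⟨hli.injective, hri.surjective⟩

lemma sigma_adj (hreg : ∀ v, G.degree v = 3) (φ : CFIGraph G f ≃g CFIGraph G g)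
    {v u : V} (h : G.Adj v u) : G.Adj (sigmaMap φ v) (sigmaMap φ u) := by
  obtain ⟨c', h', -⟩ := phi_edg hreg φ false h
  exact h'

lemma sigma_adj_rev (hreg : ∀ v, G.degree v = 3) (φ : CFIGraph G f ≃g CFIGraph G g)
    {v u : V} (h : G.Adj (sigmaMap φ v) (sigmaMap φ u)) : G.Adj v u := by
  have h2 := sigma_adj hreg φ.symm h
  rwa [sigma_comp hreg φ, sigma_comp hreg φ] at h2

lemma rel_vertex (hreg : ∀ v, G.degree v = 3) (φ : CFIGraph G f ≃g CFIGraph G g)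
    (v : V) : Even (((G.neighborFinset v).filter (fun u => tmap φ v u = true)).card) := by
  obtain ⟨S, hS, heq⟩ := phi_mid_base hreg φ v ∅ (empty_mid_pf G v)
  have key : ∀ u (hu : G.Adj v u), tmap φ v u = decide (sigmaMap φ u ∈ S) := by
    intro u hu
    obtain ⟨h', heq'⟩ := phi_edg_eq hreg φ false hu
    have hadj : (CFIGraph G f).Adj (cmid G v ∅ (empty_mid_pf G v)) (cedg G v u false hu) :=
      adj_mid_edg.mpr ⟨rfl, by simp⟩
    have h2 := φ.map_adj_iff.mpr hadj
    rw [heq, heq'] at h2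
    have h3 := (adj_mid_edg.mp h2).2
    simpa using h3
  have hcard : ((G.neighborFinset v).filter (fun u => tmap φ v u = true)).card = S.card := by
    apply Finset.card_bij (fun u _ => sigmaMap φ u)
    · intro u hu
      rw [Finset.mem_filter, SimpleGraph.mem_neighborFinset] at hu
      have := key u hu.1
      rw [hu.2] at this
      exact of_decide_eq_true this.symm
    · intro a ha b hb hab
      exact (sigma_bij hreg φ).injective hab
    · intro s hs
      obtain ⟨u, rfl⟩ := (sigma_bij hreg φ).surjective s
      have hsadj : G.Adj (sigmaMap φ v) (sigmaMap φ u) := by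
        rw [← SimpleGraph.mem_neighborFinset]
        exact hS.1 hs
      have huv : G.Adj v u := sigma_adj_rev hreg φ hsadj
      refine ⟨u, ?_, rfl⟩
      rw [Finset.mem_filter, SimpleGraph.mem_neighborFinset]
      exact ⟨huv, by rw [key u huv]; exact decide_eq_true hs⟩
  rw [hcard]
  exact hS.2

def chi (b : Bool) : ZMod 2 := if b then 1 else 0

lemma chi_sum_even {s : Finset V} {p : V → Bool}
    (h : Even ((s.filter (fun u => p u = true)).card)) :
    ∑ u ∈ s, chi (p u) = 0 := by
  have h1 : ∑ u ∈ s, chi (p u) = ((s.filter (fun u => p u = true)).card : ZMod 2) := by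
    rw [← Finset.sum_boole]
    apply Finset.sum_congr rfl
    intro u _
    cases p u <;> simp [chi]
  rw [h1, (ZMod.natCast_eq_zero_iff _ 2).mpr (even_iff_two_dvd.mp h)]

def tlift (φ : CFIGraph G f ≃g CFIGraph G g) : Sym2 V → ZMod 2 :=
  Sym2.lift ⟨fun v u => chi (tmap φ v u) + chi (tmap φ u v), fun _ _ => add_comm _ _⟩

lemma chi_rel_edge (hreg : ∀ v, G.degree v = 3) (φ : CFIGraph G f ≃g CFIGraph G g)
    {v u : V} (h : G.Adj v u) :
    chi (f s(v,u)) + chi (g (Sym2.map (sigmaMap φ) s(v,u))) = tlift φ s(v,u) := by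
  have heq := rel_edge hreg φ h
  rw [Sym2.map_pair_eq]
  simp only [tlift, Sym2.lift_mk]
  revert heq
  generalize f s(v,u) = A
  generalize g s(sigmaMap φ v, sigmaMap φ u) = B
  generalize tmap φ v u = C
  generalize tmap φ u v = D
  cases A <;> cases B <;> cases C <;> cases D <;> decide

lemma sum_tlift_eq (hreg : ∀ v, G.degree v = 3) (φ : CFIGraph G f ≃g CFIGraph G g) :
    ∑ p ∈ Finset.univ.filter (fun p : V × V => G.Adj p.1 p.2), chi (tmap φ p.1 p.2)
      = ∑ e ∈ G.edgeFinset, tlift φ e := by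
  rw [← Finset.sum_fiberwise_of_maps_to (g := fun p : V × V => s(p.1, p.2))
    (t := G.edgeFinset) ?hmem]
  case hmem =>
    intro p hp
    rw [Finset.mem_filter] at hp
    rw [SimpleGraph.mem_edgeFinset, SimpleGraph.mem_edgeSet]
    exact hp.2
  apply Finset.sum_congr rfl
  intro e he
  revert he
  induction e using Sym2.ind with
  | _ a b =>
    intro he
    rw [SimpleGraph.mem_edgeFinset, SimpleGraph.mem_edgeSet] at he
    have hfib : ((Finset.univ.filter (fun p : V × V => G.Adj p.1 p.2)).filter
        (fun p => s(p.1, p.2) = s(a, b))) = {(a,b), (b,a)} := by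
      ext ⟨x, y⟩
      simp only [Finset.mem_filter, Finset.mem_univ, true_and, Finset.mem_insert,
        Finset.mem_singleton, Sym2.eq_iff, Prod.mk.injEq]
      constructor
      · rintro ⟨hadj, (⟨rfl, rfl⟩ | ⟨rfl, rfl⟩)⟩
        · exact Or.inl ⟨rfl, rfl⟩
        · exact Or.inr ⟨rfl, rfl⟩
      · rintro (⟨rfl, rfl⟩ | ⟨rfl, rfl⟩)
        · exact ⟨he, Or.inl ⟨rfl, rfl⟩⟩
        · exact ⟨he.symm, Or.inr ⟨rfl, rfl⟩⟩
    rw [hfib, Finset.sum_pair (by simp [G.ne_of_adj he] : ((a,b) : V × V) ≠ (b,a))]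
    rw [tlift, Sym2.lift_mk]

lemma sum_D_zero (hreg : ∀ v, G.degree v = 3) (φ : CFIGraph G f ≃g CFIGraph G g) :
    ∑ p ∈ Finset.univ.filter (fun p : V × V => G.Adj p.1 p.2), chi (tmap φ p.1 p.2) = 0 := by
  rw [Finset.sum_filter, ← Finset.univ_product_univ, Finset.sum_product]
  have hv : ∀ v, ∑ u, (if G.Adj v u then chi (tmap φ v u) else 0) = 0 := by
    intro v
    rw [← Finset.sum_filter]
    have hNv : Finset.univ.filter (fun u => G.Adj v u) = G.neighborFinset v := by
      ext u
      simp [SimpleGraph.mem_neighborFinset]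
    rw [hNv]
    exact chi_sum_even (rel_vertex hreg φ v)
  simp [hv]

lemma sum_g_sigma (hreg : ∀ v, G.degree v = 3) (φ : CFIGraph G f ≃g CFIGraph G g) :
    ∑ e ∈ G.edgeFinset, chi (g (Sym2.map (sigmaMap φ) e)) = ∑ e ∈ G.edgeFinset, chi (g e) := by
  apply Finset.sum_bij (fun e _ => Sym2.map (sigmaMap φ) e)
  · intro e he
    revert he
    induction e using Sym2.ind with
    | _ a b =>
      intro he
      rw [SimpleGraph.mem_edgeFinset, SimpleGraph.mem_edgeSet] at he
      rw [Sym2.map_pair_eq, SimpleGraph.mem_edgeFinset, SimpleGraph.mem_edgeSet]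
      exact sigma_adj hreg φ he
  · intro a ha b hb hab
    exact Sym2.map.injective (sigma_bij hreg φ).injective hab
  · intro e' he'
    revert he'
    induction e' using Sym2.ind with
    | _ a b =>
      intro he'
      obtain ⟨a', rfl⟩ := (sigma_bij hreg φ).surjective a
      obtain ⟨b', rfl⟩ := (sigma_bij hreg φ).surjective b
      rw [SimpleGraph.mem_edgeFinset, SimpleGraph.mem_edgeSet] at he'
      refine ⟨s(a', b'), ?_, by rw [Sym2.map_pair_eq]⟩
      rw [SimpleGraph.mem_edgeFinset, SimpleGraph.mem_edgeSet]
      exact sigma_adj_rev hreg φ he'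
  · intros
    rfl


lemma sum_chi_card (f : Sym2 V → Bool) :
    ∑ e ∈ G.edgeFinset, chi (f e) =
      (((G.edgeFinset.filter fun e => f e = true).card : ℕ) : ZMod 2) := by
  rw [← Finset.sum_boole]
  apply Finset.sum_congr rfl
  intro e _
  cases f e <;> simp [chi]

theorem cfi_noniso_of_diff_parity' (G : SimpleGraph V) [DecidableRel G.Adj]
    (hconn : G.Connected) (hreg : ∀ v, G.degree v = 3)
    (f g : Sym2 V → Bool) (hpar : ¬ (EvenParity G f ↔ EvenParity G g)) :
    IsEmpty (CFIGraph G f ≃g CFIGraph G g) := by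
  constructor
  intro φ
  have hsum1 : ∑ e ∈ G.edgeFinset, (chi (f e) + chi (g (Sym2.map (sigmaMap φ) e)))
      = ∑ e ∈ G.edgeFinset, tlift φ e := by
    apply Finset.sum_congr rfl
    intro e he
    revert he
    induction e using Sym2.ind with
    | _ a b =>
      intro he
      rw [SimpleGraph.mem_edgeFinset, SimpleGraph.mem_edgeSet] at he
      exact chi_rel_edge hreg φ he
  rw [Finset.sum_add_distrib, sum_g_sigma hreg φ, ← sum_tlift_eq hreg φ,
    sum_D_zero hreg φ, sum_chi_card, sum_chi_card] at hsum1
  have hcast : ∀ n : ℕ, Even n ↔ ((n : ZMod 2) = 0) := by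
    intro n
    rw [ZMod.natCast_eq_zero_iff]; exact even_iff_two_dvd
  have h0 : ∀ a b : ZMod 2, a + b = 0 → (a = 0 ↔ b = 0) := by decide
  exact hpar (by rw [EvenParity, EvenParity, hcast, hcast]; exact h0 _ _ hsum1)

/-- If `f` and `g` have different parity and `G` is a connected 3-regular graph,
then the uncolored CFI graphs `Y_f(G)` and `Y_g(G)` are not isomorphic. -/
theorem cfi_noniso_of_diff_parity {V : Type*} [Fintype V] [DecidableEq V]
    (G : SimpleGraph V) [DecidableRel G.Adj]
    (hconn : G.Connected) (hreg : ∀ v, G.degree v = 3)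
    (f g : Sym2 V → Bool) (hpar : ¬ (EvenParity G f ↔ EvenParity G g)) :
    IsEmpty (CFIGraph G f ≃g CFIGraph G g) := by
  exact cfi_noniso_of_diff_parity' G hconn hreg f g hpar
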